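/- Let n ≥ 2 and let a be an odd integer with 1 ≤ a ≤ n. Then the minimum cardinality of an a-dominating set of the rook's graph K_n □ K_n equals ((a+1)/2)·n − (a−1)/2. -/

import Mathlib

open Finset

lemma modcount (m b k : ℕ) (hm : 0 < m) (hk : k ≤ m) (hb : b ≤ m) :
    ((Finset.range m).filter (fun x => (x + b) % m < k)).card = k := by
  have key : ∀ y < m, ((y + (m - b)) % m + b) % m = y := by
    intro y hy
    rw [Nat.mod_add_mod]
    have h : y + (m - b) + b = y + m := by omega
    rw [h, Nat.add_mod_right, Nat.mod_eq_of_lt hy]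
  have : ((Finset.range m).filter (fun x => (x + b) % m < k)).card = (Finset.range k).card := by
    apply Finset.card_nbij' (fun x => (x + b) % m) (fun y => (y + (m - b)) % m)
    · intro x hx
      simp only [Finset.mem_coe, Finset.mem_filter] at hx
      exact Finset.mem_range.2 hx.2
    · intro y hy
      simp only [Finset.mem_coe, Finset.mem_range] at hy
      simp only [Finset.mem_coe, Finset.mem_filter, Finset.mem_range]
      exact ⟨Nat.mod_lt _ hm, by rw [key y (lt_of_lt_of_le hy hk)]; exact hy⟩
    · intro x hx
      simp only [Finset.mem_coe, Finset.mem_filter, Finset.mem_range] at hx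
      beta_reduce
      rw [Nat.mod_add_mod]
      have h : x + b + (m - b) = x + m := by omega
      rw [h, Nat.add_mod_right, Nat.mod_eq_of_lt hx.1]
    · intro y hy
      exact key y (lt_of_lt_of_le (Finset.mem_range.1 hy) hk)
  rw [this, Finset.card_range]
lemma split_count (D : Finset (ℕ × ℕ)) (i j : ℕ) (hp : (i, j) ∉ D) :
    (D.filter (fun q => (q.1 = i ∧ q.2 ≠ j) ∨ (q.2 = j ∧ q.1 ≠ i))).card
      = (D.filter (fun q => q.1 = i)).card + (D.filter (fun q => q.2 = j)).card := by
  rw [filter_or, card_union_of_disjoint]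
  · congr 1
    · apply congrArg card
      apply filter_congr
      intro q hq
      simp only [and_iff_left_iff_imp]
      intro h1 h2
      have hq2 : q = (i, j) := Prod.ext h1 h2
      exact hp (hq2 ▸ hq)
    · apply congrArg card
      apply filter_congr
      intro q hq
      simp only [and_iff_left_iff_imp]
      intro h1 h2
      have hq2 : q = (i, j) := Prod.ext h2 h1
      exact hp (hq2 ▸ hq)
  · rw [Finset.disjoint_filter]
    rintro q _ ⟨h1, h2⟩ ⟨h3, h4⟩
    exact h2 h3

lemma lower_aux (n s : ℕ) (hn : 2*s+1 ≤ n)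
    (D : Finset (ℕ × ℕ)) (hsub : D ⊆ Finset.range n ×ˢ Finset.range n)
    (hdom : ∀ i j, i < n → j < n → (i,j) ∉ D →
      2*s+1 ≤ (D.filter (fun q => q.1 = i)).card + (D.filter (fun q => q.2 = j)).card)
    (i₀ : ℕ) (hi₀ : i₀ < n)
    (hminr : ∀ i < n, (D.filter (fun q => q.1 = i₀)).card ≤ (D.filter (fun q => q.1 = i)).card)
    (hminc : ∀ j < n, (D.filter (fun q => q.1 = i₀)).card ≤ (D.filter (fun q => q.2 = j)).card) :
    (s+1)*n - s ≤ D.card := by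
  set r := (D.filter (fun q => q.1 = i₀)).card with hr
  have hrowsum : D.card = ∑ i ∈ Finset.range n, (D.filter (fun q => q.1 = i)).card := by
    apply Finset.card_eq_sum_card_fiberwise
    intro x hx
    exact Finset.mem_range.2 (Finset.mem_range.1 (Finset.mem_product.1 (hsub hx)).1)
  have hcolsum : D.card = ∑ j ∈ Finset.range n, (D.filter (fun q => q.2 = j)).card := by
    apply Finset.card_eq_sum_card_fiberwise
    intro x hx
    exact Finset.mem_range.2 (Finset.mem_range.1 (Finset.mem_product.1 (hsub hx)).2)
  rcases le_or_gt (s+1) r with hcase | hcase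
  · calc (s+1)*n - s ≤ (s+1)*n := Nat.sub_le _ _
      _ = n*(s+1) := Nat.mul_comm _ _
      _ ≤ n*r := Nat.mul_le_mul_left _ hcase
      _ = ∑ _i ∈ Finset.range n, r := by rw [Finset.sum_const, Finset.card_range, smul_eq_mul]
      _ ≤ ∑ i ∈ Finset.range n, (D.filter (fun q => q.1 = i)).card :=
          Finset.sum_le_sum (fun i hi => hminr i (Finset.mem_range.1 hi))
      _ = D.card := hrowsum.symm
  · -- r ≤ s
    have hrs : r ≤ s := by omega
    -- number of j < n with (i₀, j) ∈ D equals r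
    have himg : D.filter (fun q => q.1 = i₀)
        = ((Finset.range n).filter (fun j => (i₀, j) ∈ D)).image (fun j => (i₀, j)) := by
      ext ⟨x, y⟩
      simp only [Finset.mem_filter, Finset.mem_image, Finset.mem_range, Prod.mk.injEq]
      constructor
      · rintro ⟨hmem, hx⟩
        exact ⟨y, ⟨Finset.mem_range.1 (Finset.mem_product.1 (hsub hmem)).2,
          hx ▸ hmem⟩, hx.symm, rfl⟩
      · rintro ⟨j, ⟨hj, hmem⟩, h1, h2⟩
        subst h1; subst h2
        exact ⟨hmem, rfl⟩
    have hOcard : ((Finset.range n).filter (fun j => (i₀, j) ∈ D)).card = r := by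
      rw [hr, himg, Finset.card_image_of_injective]
      intro x y hxy
      simpa using hxy
    have hZcard : ((Finset.range n).filter (fun j => ¬ (i₀, j) ∈ D)).card = n - r := by
      have := Finset.card_filter_add_card_filter_not
        (s := Finset.range n) (p := fun j => (i₀, j) ∈ D)
      rw [Finset.card_range] at this
      omega
    have hsplit : D.card = ∑ j ∈ (Finset.range n).filter (fun j => (i₀, j) ∈ D),
          (D.filter (fun q => q.2 = j)).card
        + ∑ j ∈ (Finset.range n).filter (fun j => ¬ (i₀, j) ∈ D),
          (D.filter (fun q => q.2 = j)).card := by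
      rw [hcolsum, Finset.sum_filter_add_sum_filter_not]
    have hO : r * r ≤ ∑ j ∈ (Finset.range n).filter (fun j => (i₀, j) ∈ D),
        (D.filter (fun q => q.2 = j)).card := by
      calc r * r = ∑ _j ∈ (Finset.range n).filter (fun j => (i₀, j) ∈ D), r := by
            rw [Finset.sum_const, hOcard, smul_eq_mul]
        _ ≤ _ := Finset.sum_le_sum (fun j hj => hminc j
            (Finset.mem_range.1 (Finset.mem_filter.1 hj).1))
    have hZ : (n - r) * (2*s+1 - r) ≤ ∑ j ∈ (Finset.range n).filter (fun j => ¬ (i₀, j) ∈ D),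
        (D.filter (fun q => q.2 = j)).card := by
      calc (n - r) * (2*s+1 - r)
          = ∑ _j ∈ (Finset.range n).filter (fun j => ¬ (i₀, j) ∈ D), (2*s+1 - r) := by
            rw [Finset.sum_const, hZcard, smul_eq_mul]
        _ ≤ _ := by
            apply Finset.sum_le_sum
            intro j hj
            simp only [Finset.mem_filter, Finset.mem_range] at hj
            have := hdom i₀ j hi₀ hj.1 hj.2
            omega
    have hfinal : (s+1)*n - s ≤ r * r + (n - r) * (2*s+1 - r) := by
      obtain ⟨u, hu⟩ : ∃ u, s = r + u := ⟨s - r, by omega⟩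
      obtain ⟨v, hv⟩ : ∃ v, n = 2*s+1+v := ⟨n - (2*s+1), by omega⟩
      subst hu; subst hv
      have h1 : 2*(r+u)+1+v - r = r + 2*u + 1 + v := by omega
      have h2 : 2*(r+u)+1 - r = r + 2*u + 1 := by omega
      rw [h1, h2]
      have h3 : (r+u+1)*(2*(r+u)+1+v) + (2*u*u + 2*u + u*v)
          = r*r + (r+2*u+1+v)*(r+2*u+1) + (r+u) := by ring
      omega
    omega

lemma swap_fiber_fst (D : Finset (ℕ × ℕ)) (i : ℕ) :
    ((D.image Prod.swap).filter (fun q => q.1 = i)).card = (D.filter (fun q => q.2 = i)).card := by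
  have h : (D.image Prod.swap).filter (fun q => q.1 = i)
      = (D.filter (fun q => q.2 = i)).image Prod.swap := by
    ext ⟨x, y⟩
    simp only [Finset.mem_filter, Finset.mem_image, Prod.exists, Prod.swap_prod_mk,
      Prod.mk.injEq]
    constructor
    · rintro ⟨⟨a, b, hab, h1, h2⟩, h3⟩
      exact ⟨a, b, ⟨hab, by omega⟩, h1, h2⟩
    · rintro ⟨a, b, ⟨hab, hb⟩, h1, h2⟩
      exact ⟨⟨a, b, hab, h1, h2⟩, by omega⟩
  rw [h, Finset.card_image_of_injective _ Prod.swap_injective]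

lemma swap_fiber_snd (D : Finset (ℕ × ℕ)) (i : ℕ) :
    ((D.image Prod.swap).filter (fun q => q.2 = i)).card = (D.filter (fun q => q.1 = i)).card := by
  have h : (D.image Prod.swap).filter (fun q => q.2 = i)
      = (D.filter (fun q => q.1 = i)).image Prod.swap := by
    ext ⟨x, y⟩
    simp only [Finset.mem_filter, Finset.mem_image, Prod.exists, Prod.swap_prod_mk,
      Prod.mk.injEq]
    constructor
    · rintro ⟨⟨a, b, hab, h1, h2⟩, h3⟩
      exact ⟨a, b, ⟨hab, by omega⟩, h1, h2⟩
    · rintro ⟨a, b, ⟨hab, hb⟩, h1, h2⟩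
      exact ⟨⟨a, b, hab, h1, h2⟩, by omega⟩
  rw [h, Finset.card_image_of_injective _ Prod.swap_injective]

lemma fiber_fst (n : ℕ) (P : ℕ × ℕ → Prop) [DecidablePred P] (i : ℕ) (hi : i < n) :
    (((Finset.range n ×ˢ Finset.range n).filter P).filter (fun q => q.1 = i)).card
      = ((Finset.range n).filter (fun j => P (i, j))).card := by
  apply Finset.card_nbij' (fun q => q.2) (fun j => (i, j))
  · rintro ⟨x, y⟩ hq
    simp only [Finset.mem_coe, Finset.mem_filter, Finset.mem_product, Finset.mem_range] at hq ⊢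
    obtain ⟨⟨⟨hx, hy⟩, hP⟩, h1⟩ := hq
    subst h1
    exact ⟨hy, hP⟩
  · intro j hj
    simp only [Finset.mem_coe, Finset.mem_filter, Finset.mem_product, Finset.mem_range] at hj ⊢
    exact ⟨⟨⟨hi, hj.1⟩, hj.2⟩, trivial⟩
  · rintro ⟨x, y⟩ hq
    simp only [Finset.mem_coe, Finset.mem_filter] at hq
    have := hq.2
    rw [this]
  · intro j hj
    rfl

lemma fiber_snd (n : ℕ) (P : ℕ × ℕ → Prop) [DecidablePred P] (j : ℕ) (hj : j < n) :
    (((Finset.range n ×ˢ Finset.range n).filter P).filter (fun q => q.2 = j)).card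
      = ((Finset.range n).filter (fun i => P (i, j))).card := by
  apply Finset.card_nbij' (fun q => q.1) (fun i => (i, j))
  · rintro ⟨x, y⟩ hq
    simp only [Finset.mem_coe, Finset.mem_filter, Finset.mem_product, Finset.mem_range] at hq ⊢
    obtain ⟨⟨⟨hx, hy⟩, hP⟩, h1⟩ := hq
    subst h1
    exact ⟨hx, hP⟩
  · intro i hi
    simp only [Finset.mem_coe, Finset.mem_filter, Finset.mem_product, Finset.mem_range] at hi ⊢
    exact ⟨⟨⟨hi.1, hj⟩, hi.2⟩, trivial⟩
  · rintro ⟨x, y⟩ hq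
    simp only [Finset.mem_coe, Finset.mem_filter] at hq
    have := hq.2
    rw [this]
  · intro i hi
    rfl

lemma linecount0 (n s : ℕ) (hs : s ≤ n) :
    ((Finset.range n).filter (fun x => x < s)).card = s := by
  have h : (Finset.range n).filter (fun x => x < s) = Finset.range s := by
    ext x
    simp only [Finset.mem_filter, Finset.mem_range]
    omega
  rw [h, Finset.card_range]

lemma linecount1 (n s b : ℕ) (hn : 2*s+1 ≤ n) (hb : b ≤ n - s) :
    ((Finset.range n).filter (fun x => s ≤ x ∧ ((x - s) + b) % (n - s) < s+1)).card = s+1 := by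
  set m := n - s with hm
  have hm0 : 0 < m := by omega
  have hsm : s + 1 ≤ m := by omega
  have h : ((Finset.range n).filter (fun x => s ≤ x ∧ ((x - s) + b) % m < s+1)).card
      = ((Finset.range m).filter (fun y => (y + b) % m < s+1)).card := by
    apply Finset.card_nbij' (fun x => x - s) (fun y => y + s)
    · intro x hx
      simp only [Finset.mem_coe, Finset.mem_filter, Finset.mem_range] at hx ⊢
      exact ⟨by omega, hx.2.2⟩
    · intro y hy
      simp only [Finset.mem_coe, Finset.mem_filter, Finset.mem_range] at hy ⊢
      refine ⟨by omega, by omega, ?_⟩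
      have : y + s - s = y := by omega
      rw [this]
      exact hy.2
    · intro x hx
      simp only [Finset.mem_coe, Finset.mem_filter, Finset.mem_range] at hx
      beta_reduce
      omega
    · intro y hy
      beta_reduce
      omega
  rw [h, modcount m b (s+1) hm0 hsm hb]

lemma construction (n s : ℕ) (hn : 2*s+1 ≤ n) :
    ∃ D : Finset (ℕ × ℕ), D ⊆ Finset.range n ×ˢ Finset.range n ∧ D.card = (s+1)*n - s ∧
      ∀ i j, i < n → j < n → (i,j) ∉ D →
        2*s+1 ≤ (D.filter (fun q => q.1 = i)).card + (D.filter (fun q => q.2 = j)).card := by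
  set P : ℕ × ℕ → Prop := fun q =>
    (q.1 < s ∧ q.2 < s) ∨ (s ≤ q.1 ∧ s ≤ q.2 ∧ ((q.1 - s) + (q.2 - s)) % (n - s) < s+1)
    with hP
  set D : Finset (ℕ × ℕ) := (Finset.range n ×ˢ Finset.range n).filter P with hD
  have hsub : D ⊆ Finset.range n ×ˢ Finset.range n := Finset.filter_subset _ _
  have rowcard : ∀ i < n, (D.filter (fun q => q.1 = i)).card = if i < s then s else s+1 := by
    intro i hi
    rw [hD, fiber_fst n P i hi]
    by_cases hi' : i < s
    · rw [if_pos hi']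
      have h : (Finset.range n).filter (fun j => P (i, j))
          = (Finset.range n).filter (fun j => j < s) := by
        apply Finset.filter_congr
        intro j _
        simp only [hP]
        constructor
        · rintro (⟨_, h⟩ | ⟨h, _⟩)
          · exact h
          · omega
        · intro h
          exact Or.inl ⟨hi', h⟩
      rw [h, linecount0 n s (by omega)]
    · rw [if_neg hi']
      have h : (Finset.range n).filter (fun j => P (i, j))
          = (Finset.range n).filter (fun j => s ≤ j ∧ ((j - s) + (i - s)) % (n - s) < s+1) := by
        apply Finset.filter_congr
        intro j _
        simp only [hP]
        constructor
        · rintro (⟨h, _⟩ | ⟨_, h2, h3⟩)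
          · omega
          · exact ⟨h2, by rwa [Nat.add_comm] at h3⟩
        · rintro ⟨h1, h2⟩
          exact Or.inr ⟨by omega, h1, by rwa [Nat.add_comm]⟩
      rw [h, linecount1 n s (i - s) hn (by omega)]
  have colcard : ∀ j < n, (D.filter (fun q => q.2 = j)).card = if j < s then s else s+1 := by
    intro j hj
    rw [hD, fiber_snd n P j hj]
    by_cases hj' : j < s
    · rw [if_pos hj']
      have h : (Finset.range n).filter (fun i => P (i, j))
          = (Finset.range n).filter (fun i => i < s) := by
        apply Finset.filter_congr
        intro i _
        simp only [hP]
        constructor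
        · rintro (⟨h, _⟩ | ⟨_, h, _⟩)
          · exact h
          · omega
        · intro h
          exact Or.inl ⟨h, hj'⟩
      rw [h, linecount0 n s (by omega)]
    · rw [if_neg hj']
      have h : (Finset.range n).filter (fun i => P (i, j))
          = (Finset.range n).filter (fun i => s ≤ i ∧ ((i - s) + (j - s)) % (n - s) < s+1) := by
        apply Finset.filter_congr
        intro i _
        simp only [hP]
        constructor
        · rintro (⟨_, h⟩ | ⟨h1, _, h3⟩)
          · omega
          · exact ⟨h1, h3⟩
        · rintro ⟨h1, h2⟩
          exact Or.inr ⟨h1, by omega, h2⟩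
      rw [h, linecount1 n s (j - s) hn (by omega)]
  have hcard : D.card = (s+1)*n - s := by
    have h1 : D.card = ∑ i ∈ Finset.range n, (D.filter (fun q => q.1 = i)).card := by
      apply Finset.card_eq_sum_card_fiberwise
      intro x hx
      exact Finset.mem_range.2 (Finset.mem_range.1 (Finset.mem_product.1 (hsub hx)).1)
    rw [h1, Finset.sum_congr rfl (fun i hi => rowcard i (Finset.mem_range.1 hi))]
    rw [Finset.sum_ite, Finset.sum_const, Finset.sum_const, linecount0 n s (by omega)]
    have h2 : ((Finset.range n).filter (fun i => ¬ i < s)).card = n - s := by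
      have := Finset.card_filter_add_card_filter_not
        (s := Finset.range n) (p := fun i => i < s)
      rw [Finset.card_range, linecount0 n s (by omega)] at this
      omega
    rw [h2, smul_eq_mul, smul_eq_mul]
    obtain ⟨v, rfl⟩ : ∃ v, n = 2*s+1+v := ⟨n - (2*s+1), by omega⟩
    have h3 : 2*s+1+v - s = s+1+v := by omega
    rw [h3]
    have h4 : (s+1)*(2*s+1+v) = s*s + (s+1+v)*(s+1) + s := by ring
    omega
  refine ⟨D, hsub, hcard, ?_⟩
  intro i j hi hj hnot
  rw [rowcard i hi, colcard j hj]
  by_cases hi' : i < s <;> by_cases hj' : j < s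
  · exfalso
    apply hnot
    rw [hD]
    simp only [Finset.mem_filter, Finset.mem_product, Finset.mem_range]
    exact ⟨⟨hi, hj⟩, Or.inl ⟨hi', hj'⟩⟩
  all_goals simp [hi', hj']
  all_goals omega

lemma split_count' (D : Finset (ℕ × ℕ)) (p : ℕ × ℕ) (hp : p ∉ D) :
    (D.filter (fun q => (q.1 = p.1 ∧ q.2 ≠ p.2) ∨ (q.2 = p.2 ∧ q.1 ≠ p.1))).card
      = (D.filter (fun q => q.1 = p.1)).card + (D.filter (fun q => q.2 = p.2)).card := by
  obtain ⟨i, j⟩ := p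
  exact split_count D i j hp

/-- for odd `a` with `1 ≤ a ≤ n` and `n ≥ 2`, the minimum size of an
`a`-dominating set of the rook's graph `K_n □ K_n` equals `((a+1)/2)·n − (a−1)/2`. -/
theorem stmt_11 (n a : ℕ) (hn : 2 ≤ n) (ha1 : 1 ≤ a) (ha2 : a ≤ n) (haodd : Odd a) :
    sInf {k : ℕ | ∃ D : Finset (ℕ × ℕ), D ⊆ Finset.range n ×ˢ Finset.range n ∧
      D.card = k ∧
      ∀ p ∈ Finset.range n ×ˢ Finset.range n, p ∉ D →
        a ≤ (D.filter (fun q =>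
          (q.1 = p.1 ∧ q.2 ≠ p.2) ∨ (q.2 = p.2 ∧ q.1 ≠ p.1))).card} =
    ((a + 1) / 2) * n - (a - 1) / 2 := by
  obtain ⟨s, hs⟩ := haodd
  have hsn : 2*s+1 ≤ n := by omega
  have h1 : (a + 1) / 2 = s + 1 := by omega
  have h2 : (a - 1) / 2 = s := by omega
  rw [h1, h2]
  have hmem : (s+1)*n - s ∈ {k : ℕ | ∃ D : Finset (ℕ × ℕ),
      D ⊆ Finset.range n ×ˢ Finset.range n ∧ D.card = k ∧
      ∀ p ∈ Finset.range n ×ˢ Finset.range n, p ∉ D →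
        a ≤ (D.filter (fun q =>
          (q.1 = p.1 ∧ q.2 ≠ p.2) ∨ (q.2 = p.2 ∧ q.1 ≠ p.1))).card} := by
    obtain ⟨D, hsub, hcard, hdom⟩ := construction n s hsn
    refine ⟨D, hsub, hcard, ?_⟩
    intro p hp hnot
    obtain ⟨i, j⟩ := p
    simp only [Finset.mem_product, Finset.mem_range] at hp
    have hgoal : a ≤ (D.filter (fun q =>
        (q.1 = i ∧ q.2 ≠ j) ∨ (q.2 = j ∧ q.1 ≠ i))).card := by
      rw [split_count D i j hnot]
      have := hdom i j hp.1 hp.2 hnot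
      omega
    exact hgoal
  apply le_antisymm
  · exact Nat.sInf_le hmem
  · apply le_csInf ⟨_, hmem⟩
    rintro k ⟨D, hsub, hcard, hdom'⟩
    have hdom : ∀ i j, i < n → j < n → (i,j) ∉ D →
        2*s+1 ≤ (D.filter (fun q => q.1 = i)).card + (D.filter (fun q => q.2 = j)).card := by
      intro i j hi hj hnot
      have h := hdom' (i,j) (by
        simp only [Finset.mem_product, Finset.mem_range]
        exact ⟨hi, hj⟩) hnot
      have h2 : a ≤ (D.filter (fun q =>
          (q.1 = i ∧ q.2 ≠ j) ∨ (q.2 = j ∧ q.1 ≠ i))).card := h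
      rw [split_count D i j hnot] at h2
      omega
    obtain ⟨i₀, hi₀mem, hi₀min⟩ := Finset.exists_min_image (Finset.range n)
      (fun i => (D.filter (fun q => q.1 = i)).card) ⟨0, Finset.mem_range.2 (by omega)⟩
    obtain ⟨j₀, hj₀mem, hj₀min⟩ := Finset.exists_min_image (Finset.range n)
      (fun j => (D.filter (fun q => q.2 = j)).card) ⟨0, Finset.mem_range.2 (by omega)⟩
    rcases le_total ((D.filter (fun q => q.1 = i₀)).card) ((D.filter (fun q => q.2 = j₀)).card)
      with hle | hle
    · have := lower_aux n s hsn D hsub hdom i₀ (Finset.mem_range.1 hi₀mem)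
        (fun i hi => hi₀min i (Finset.mem_range.2 hi))
        (fun j hj => le_trans hle (hj₀min j (Finset.mem_range.2 hj)))
      omega
    · set E := D.image Prod.swap with hE
      have hsubE : E ⊆ Finset.range n ×ˢ Finset.range n := by
        intro q hq
        rw [hE, Finset.mem_image] at hq
        obtain ⟨p, hp, rfl⟩ := hq
        have := hsub hp
        simp only [Finset.mem_product, Finset.mem_range] at this ⊢
        exact ⟨this.2, this.1⟩
      have hcardE : E.card = D.card := Finset.card_image_of_injective _ Prod.swap_injective
      have hdomE : ∀ i j, i < n → j < n → (i,j) ∉ E →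
          2*s+1 ≤ (E.filter (fun q => q.1 = i)).card + (E.filter (fun q => q.2 = j)).card := by
        intro i j hi hj hnot
        rw [swap_fiber_fst, swap_fiber_snd]
        have hnotD : (j, i) ∉ D := fun h => hnot (by
          rw [hE, Finset.mem_image]
          exact ⟨(j, i), h, rfl⟩)
        have := hdom j i hj hi hnotD
        omega
      have := lower_aux n s hsn E hsubE hdomE j₀ (Finset.mem_range.1 hj₀mem)
        (fun i hi => by
          rw [swap_fiber_fst, swap_fiber_fst]
          exact hj₀min i (Finset.mem_range.2 hi))
        (fun j hj => by
          rw [swap_fiber_fst, swap_fiber_snd]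
          exact le_trans hle (hi₀min j (Finset.mem_range.2 hj)))
      omega
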